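/- Let S¹_p = {0,…,p−1} with metric d_p(x,y) = min(|x−y|/p, 1−|x−y|/p), and let π* be the uniform distribution on S¹_p. Then for every probability distribution π on S¹_p, Var(π) ≤ Var(π*), where Var(π) = min_{α∈S¹_p} Σ_{x} d_p(x,α)² π(x). -/

import Mathlib

/-- On the discrete circle with p states, the uniform distribution maximizes the
Fréchet variance. -/
theorem frechetVariance_discrete_circle_le_uniform (p : ℕ) (hp : 0 < p)
    (π : Fin p → ℝ) (hπ0 : ∀ i, 0 ≤ π i) (hπ1 : ∑ i, π i = 1) :
    (⨅ α : Fin p, ∑ x : Fin p,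
        (min (|(x.val : ℝ) - α.val| / p) (1 - |(x.val : ℝ) - α.val| / p)) ^ 2 * π x)
      ≤ ⨅ α : Fin p, ∑ x : Fin p,
        (min (|(x.val : ℝ) - α.val| / p) (1 - |(x.val : ℝ) - α.val| / p)) ^ 2 * (1 / p) := by
  haveI : NeZero p := ⟨hp.ne'⟩
  have hp' : (0:ℝ) < p := by exact_mod_cast hp
  set f : Fin p → ℝ := fun k => (min ((k.val:ℝ)/p) (1 - (k.val:ℝ)/p))^2 with hf
  have key : ∀ x α : Fin p,
      (min (|(x.val : ℝ) - α.val| / p) (1 - |(x.val : ℝ) - α.val| / p)) ^ 2 = f (x - α) := by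
    intro x α
    rcases le_or_gt α.val x.val with h | h
    · have hv : (((x - α).val : ℤ)) = x.val - α.val := by
        have := Fin.coe_int_sub_eq_ite x α
        rw [if_pos (Fin.le_def.mpr h)] at this
        exact_mod_cast this
      have hvR : (((x - α).val : ℝ)) = (x.val : ℝ) - α.val := by exact_mod_cast hv
      have habs : |(x.val : ℝ) - α.val| = ((x - α).val : ℝ) := by
        rw [hvR, abs_of_nonneg (sub_nonneg.mpr (by exact_mod_cast h))]
      rw [habs, hf]
    · have hv : (((x - α).val : ℤ)) = x.val - α.val + p := by
        have := Fin.coe_int_sub_eq_ite x α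
        rw [if_neg (by rw [Fin.le_def]; omega)] at this
        exact_mod_cast this
      have hvR : (((x - α).val : ℝ)) = (x.val : ℝ) - α.val + p := by exact_mod_cast hv
      have habs : |(x.val : ℝ) - α.val| = p - ((x - α).val : ℝ) := by
        rw [hvR, abs_of_nonpos (sub_nonpos.mpr (by exact_mod_cast h.le))]
        ring
      rw [habs, hf]
      have h1 : ((p:ℝ) - ((x - α).val : ℝ)) / p = 1 - ((x - α).val : ℝ)/p := by
        field_simp
      rw [h1]
      have h2 : (1 - (1 - ((x - α).val : ℝ)/p)) = ((x - α).val : ℝ)/p := by ring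
      rw [h2, min_comm]
  set S : ℝ := ∑ k : Fin p, f k with hS
  have sumf : ∀ x : Fin p, (∑ α : Fin p, f (x - α)) = S := fun x =>
    Fintype.sum_equiv (Equiv.subLeft x) _ _ (fun α => rfl)
  have sumf' : ∀ α : Fin p, (∑ x : Fin p, f (x - α)) = S := fun α =>
    Fintype.sum_equiv (Equiv.subRight α) _ _ (fun x => rfl)
  refine le_ciInf fun α => ?_
  have rhs_eq : (∑ x : Fin p,
      (min (|(x.val : ℝ) - α.val| / p) (1 - |(x.val : ℝ) - α.val| / p)) ^ 2 * (1 / p))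
      = S / p := by
    simp_rw [key _ α]
    rw [← Finset.sum_mul, sumf' α]
    ring
  rw [rhs_eq]
  have total : (∑ β : Fin p, ∑ x : Fin p,
      (min (|(x.val : ℝ) - β.val| / p) (1 - |(x.val : ℝ) - β.val| / p)) ^ 2 * π x) = S := by
    simp_rw [key]
    rw [Finset.sum_comm]
    calc (∑ x : Fin p, ∑ β : Fin p, f (x - β) * π x)
        = ∑ x : Fin p, S * π x := by
          refine Finset.sum_congr rfl fun x _ => ?_
          rw [← Finset.sum_mul, sumf x]
      _ = S := by rw [← Finset.mul_sum, hπ1, mul_one]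
  obtain ⟨β, -, hβ⟩ := Finset.exists_le_of_sum_le (Finset.univ_nonempty (α := Fin p))
    (f := fun β => ∑ x : Fin p,
      (min (|(x.val : ℝ) - β.val| / p) (1 - |(x.val : ℝ) - β.val| / p)) ^ 2 * π x)
    (g := fun _ => S / p)
    (by rw [total, Finset.sum_const, Finset.card_univ, Fintype.card_fin, nsmul_eq_mul]
        field_simp
        exact le_rfl)
  exact le_trans (ciInf_le (Set.Finite.bddBelow (Set.finite_range _)) β) hβ
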